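/- Let 0 < s < 1 and 0 < α < 2s. There exists a constant C > 0 (depending only on s and α) such that for every integer n ≥ 4 one has ∑_{k+l=n, k≥2, l≥2} (μ_{k,l})² · l^{3/2+α−s} · k^{3/2+α} ≤ C · n^{s+3/2+α}. -/

import Mathlib

open Real MeasureTheory Finset

/-- The coefficients `μ_{k,l}` in the expansion `Γ(φ_k, φ_l) = μ_{k,l} φ_{k+l}` of the
radially symmetric non-cutoff Boltzmann collision operator, for the model angular kernel
`β(θ) = (sin θ)^{-1-2s} cos θ`. -/
noncomputable def boltzMu (s : ℝ) (k l : ℕ) : ℝ :=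
  Real.sqrt ((Nat.factorial (2 * k + 2 * l + 1) : ℝ) /
      ((Nat.factorial (2 * k + 1) : ℝ) * (Nat.factorial (2 * l + 1) : ℝ))) *
    ∫ θ in (0:ℝ)..(Real.pi / 4),
      Real.sin θ ^ (2 * (k : ℝ) - 1 - 2 * s) * Real.cos θ ^ (2 * l + 1)

lemma fact_ineq1 (l : ℕ) : ∀ k : ℕ,
    (2*(k+l)).factorial * (l.factorial)^2 ≤ 4^k * ((2*l).factorial * ((k+l).factorial)^2)
  | 0 => by simp [pow_two]
  | (k+1) => by
    have ih := fact_ineq1 l k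
    have h1 : 2*(k+1+l) = (2*(k+l)+1)+1 := by ring
    have h2 : k+1+l = (k+l)+1 := by ring
    rw [h1, h2, Nat.factorial_succ, Nat.factorial_succ, Nat.factorial_succ]
    set n := k + l
    calc (2*n+1+1) * ((2*n+1) * (2*n).factorial) * l.factorial^2
        = (2*n+2)*(2*n+1) * ((2*n).factorial * l.factorial^2) := by ring
      _ ≤ (2*n+2)*(2*n+1) * (4^k * ((2*l).factorial * n.factorial^2)) :=
          Nat.mul_le_mul_left _ ih
      _ ≤ (2*n+2)*(2*n+2) * (4^k * ((2*l).factorial * n.factorial^2)) := by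
          exact Nat.mul_le_mul_right _ (Nat.mul_le_mul_left _ (by omega))
      _ = 4^(k+1) * ((2*l).factorial * ((n+1)*n.factorial)^2) := by ring

lemma fact_ineq2 : ∀ m : ℕ, 1 ≤ m → 16^m * m.factorial^4 ≤ 4*m*((2*m).factorial)^2
  | 0, h => by omega
  | 1, _ => by decide
  | (m+2), _ => by
    have ih := fact_ineq2 (m+1) (by omega)
    have h1 : 2*(m+2) = (2*(m+1)+1)+1 := by ring
    rw [h1, Nat.factorial_succ, Nat.factorial_succ, Nat.factorial_succ]
    set q := (2*(m+1)).factorial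
    set f := (m+1).factorial
    have key0 : 4*(m+1)*(m+2) ≤ (2*m+3)^2 := by nlinarith
    have key : 16*(m+2)^4 * (4*(m+1)) ≤ 4*(m+2)*((2*(m+1)+1+1) * (2*(m+1)+1))^2 := by
      calc 16*(m+2)^4 * (4*(m+1)) = 16*(m+2)^3 * (4*(m+1)*(m+2)) := by ring
        _ ≤ 16*(m+2)^3 * (2*m+3)^2 := Nat.mul_le_mul_left _ key0
        _ = 4*(m+2)*((2*(m+1)+1+1) * (2*(m+1)+1))^2 := by ring
    calc 16^(m+2) * ((m+2)*f)^4 = 16*(m+2)^4 * (16^(m+1) * f^4) := by ring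
      _ ≤ 16*(m+2)^4 * (4*(m+1)*q^2) := Nat.mul_le_mul_left _ ih
      _ = (16*(m+2)^4 * (4*(m+1))) * q^2 := by ring
      _ ≤ (4*(m+2)*((2*(m+1)+1+1) * (2*(m+1)+1))^2) * q^2 := Nat.mul_le_mul_right _ key
      _ = 4*(m+2)*((2*(m+1)+1+1) * ((2*(m+1)+1) * q))^2 := by ring

lemma prod_fact (a : ℕ) : ∀ l : ℕ, a.factorial * ∏ j ∈ range (l+1), (a+1+j) = (a+l+1).factorial
  | 0 => by simp [Nat.factorial_succ, mul_comm]
  | (l+1) => by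
    rw [prod_range_succ, ← mul_assoc, prod_fact a l,
      show a+1+(l+1) = (a+l+1)+1 from by omega,
      show a+(l+1)+1 = (a+l+1)+1 from by omega, Nat.factorial_succ]
    exact mul_comm _ _

lemma beta_eval (p : ℝ) (hp : 0 < p) (l : ℕ) :
    ∫ t in (0:ℝ)..1, t ^ (p-1) * (1-t)^l
      = (l.factorial : ℝ) / ∏ j ∈ range (l+1), (p + j) := by
  have hre : 0 < Complex.re (p : ℂ) := by simpa using hp
  have h := Complex.betaIntegral_eval_nat_add_one_right hre l
  have heq : Complex.betaIntegral (p:ℂ) ((l:ℂ)+1)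
      = ((∫ t in (0:ℝ)..1, t ^ (p-1) * (1-t)^l : ℝ) : ℂ) := by
    rw [Complex.betaIntegral, ← intervalIntegral.integral_ofReal]
    apply intervalIntegral.integral_congr
    intro x hx
    rw [Set.uIcc_of_le (by norm_num : (0:ℝ) ≤ 1)] at hx
    have e1 : ((l:ℂ)+1-1) = ((l:ℕ):ℂ) := by ring
    show (x:ℂ) ^ ((p:ℂ)-1) * (1-(x:ℂ)) ^ ((l:ℂ)+1-1) = _
    rw [e1, Complex.cpow_natCast,
      show ((p:ℂ)-1) = ((p-1 : ℝ):ℂ) from by push_cast; ring,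
      ← Complex.ofReal_cpow hx.1]
    push_cast
    ring
  rw [heq] at h
  have h2 : ((∫ t in (0:ℝ)..1, t ^ (p-1) * (1-t)^l : ℝ) : ℂ)
      = (((l.factorial : ℝ) / ∏ j ∈ range (l+1), (p + j) : ℝ) : ℂ) := by
    rw [h]; push_cast; ring
  exact_mod_cast h2

lemma subst_lemma (s : ℝ) (hs0 : 0 < s) (hs1 : s < 1) (k l : ℕ) (hk : 2 ≤ k) :
    ∫ θ in (0:ℝ)..(π/4), Real.sin θ ^ (2*(k:ℝ) - 1 - 2*s) * Real.cos θ ^ (2*l+1)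
      = ∫ t in (0:ℝ)..(1/2:ℝ), (1/2 : ℝ) * (t ^ ((k:ℝ)-s-1) * (1-t)^l) := by
  have hexp : (0:ℝ) < (k:ℝ)-s-1 := by
    have : (2:ℝ) ≤ (k:ℝ) := by exact_mod_cast hk
    linarith
  set g : ℝ → ℝ := fun t => (1/2 : ℝ) * (t ^ ((k:ℝ)-s-1) * (1-t)^l) with hg
  have hgc : ContinuousOn g (Set.Icc 0 (1/2)) := by
    apply ContinuousOn.mul continuousOn_const
    apply ContinuousOn.mul
    · exact ContinuousOn.rpow_const continuousOn_id (fun x _ => Or.inr hexp.le)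
    · fun_prop
  have hder : ∀ x ∈ Set.uIcc (0:ℝ) (π/4),
      HasDerivAt (fun θ => Real.sin θ ^ 2) (2 * Real.sin x * Real.cos x) x := by
    intro x _
    simpa [mul_comm, mul_assoc, pow_one] using (Real.hasDerivAt_sin x).fun_pow 2
  have hcont : ContinuousOn (fun x => 2 * Real.sin x * Real.cos x) (Set.uIcc (0:ℝ) (π/4)) := by
    fun_prop
  have himg : (fun θ => Real.sin θ ^ 2) '' Set.uIcc (0:ℝ) (π/4) ⊆ Set.Icc 0 (1/2) := by
    intro y hy
    obtain ⟨x, hx, rfl⟩ := hy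
    rw [Set.uIcc_of_le (by positivity : (0:ℝ) ≤ π/4)] at hx
    constructor
    · positivity
    · have h1 : Real.sin x ≤ Real.sin (π/4) := by
        apply Real.sin_le_sin_of_le_of_le_pi_div_two (by linarith [hx.1, pi_pos]) _ hx.2
        linarith [pi_pos]
      have h0 : 0 ≤ Real.sin x := Real.sin_nonneg_of_nonneg_of_le_pi hx.1
        (by linarith [hx.2, pi_pos])
      have : Real.sin x ^ 2 ≤ Real.sin (π/4) ^ 2 := by
        apply pow_le_pow_left₀ h0 h1
      rw [Real.sin_pi_div_four, div_pow, sq_sqrt (by norm_num : (0:ℝ) ≤ 2)] at this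
      show Real.sin x ^ 2 ≤ 1/2
      linarith

  have key := intervalIntegral.integral_comp_smul_deriv' hder hcont (hgc.mono himg)
  have h0 : Real.sin (0:ℝ) ^ 2 = 0 := by simp
  have h4 : Real.sin (π/4) ^ 2 = 1/2 := by
    rw [Real.sin_pi_div_four, div_pow, sq_sqrt (by norm_num : (0:ℝ) ≤ 2)]
    norm_num
  rw [h0, h4] at key
  rw [← key]
  apply intervalIntegral.integral_congr
  intro x hx
  rw [Set.uIcc_of_le (by positivity : (0:ℝ) ≤ π/4)] at hx
  have hsin0 : 0 ≤ Real.sin x := Real.sin_nonneg_of_nonneg_of_le_pi hx.1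
    (by linarith [hx.2, pi_pos])
  have hcos : Real.cos x ^ 2 = 1 - Real.sin x ^ 2 := Real.cos_sq' x
  show Real.sin x ^ (2*(k:ℝ) - 1 - 2*s) * Real.cos x ^ (2*l+1)
      = (2 * Real.sin x * Real.cos x) • g (Real.sin x ^ 2)
  rw [hg]
  simp only [smul_eq_mul]
  rw [show (1 - Real.sin x ^ 2) = Real.cos x ^ 2 from hcos.symm]
  rcases eq_or_lt_of_le hsin0 with h | h
  · rw [← h]
    rw [Real.zero_rpow (by intro hcon; linarith : 2*(k:ℝ) - 1 - 2*s ≠ 0)]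
    ring
  · have e1 : Real.sin x ^ (2:ℕ) = Real.sin x ^ ((2:ℝ)) := (Real.rpow_natCast _ 2).symm
    rw [e1, ← Real.rpow_mul hsin0]
    have e2 : Real.sin x ^ (2*(k:ℝ) - 1 - 2*s)
        = Real.sin x ^ ((2:ℝ) * ((k:ℝ)-s-1)) * Real.sin x := by
      rw [show (2*(k:ℝ) - 1 - 2*s) = (2:ℝ)*((k:ℝ)-s-1) + 1 from by ring,
        Real.rpow_add h, Real.rpow_one]
    rw [e2]
    ring

lemma int_le (s : ℝ) (hs0 : 0 < s) (hs1 : s < 1) (k l : ℕ) (hk : 2 ≤ k) :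
    ∫ θ in (0:ℝ)..(π/4), Real.sin θ ^ (2*(k:ℝ) - 1 - 2*s) * Real.cos θ ^ (2*l+1)
      ≤ (1/2 : ℝ) * ((l.factorial : ℝ) / ∏ j ∈ range (l+1), ((k:ℝ) - s + j)) := by
  rw [subst_lemma s hs0 hs1 k l hk]
  have hexp : (0:ℝ) < (k:ℝ)-s-1 := by
    have : (2:ℝ) ≤ (k:ℝ) := by exact_mod_cast hk
    linarith
  have hcont : ContinuousOn (fun t : ℝ => (1/2 : ℝ) * (t ^ ((k:ℝ)-s-1) * (1-t)^l))
      (Set.Icc (0:ℝ) 1) := by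
    apply ContinuousOn.mul continuousOn_const
    apply ContinuousOn.mul
    · exact ContinuousOn.rpow_const continuousOn_id (fun x _ => Or.inr hexp.le)
    · fun_prop
  have hint1 : IntervalIntegrable (fun t : ℝ => (1/2 : ℝ) * (t ^ ((k:ℝ)-s-1) * (1-t)^l))
      MeasureTheory.volume 0 (1/2) := by
    apply ContinuousOn.intervalIntegrable
    apply hcont.mono
    rw [Set.uIcc_of_le (by norm_num : (0:ℝ) ≤ 1/2)]
    intro x hx; exact ⟨hx.1, by linarith [hx.2]⟩
  have hint2 : IntervalIntegrable (fun t : ℝ => (1/2 : ℝ) * (t ^ ((k:ℝ)-s-1) * (1-t)^l))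
      MeasureTheory.volume (1/2) 1 := by
    apply ContinuousOn.intervalIntegrable
    apply hcont.mono
    rw [Set.uIcc_of_le (by norm_num : (1/2:ℝ) ≤ 1)]
    intro x hx; exact ⟨by linarith [hx.1], hx.2⟩
  have hadd := intervalIntegral.integral_add_adjacent_intervals hint1 hint2
  have hnn : 0 ≤ ∫ t in (1/2:ℝ)..1, (1/2 : ℝ) * (t ^ ((k:ℝ)-s-1) * (1-t)^l) := by
    apply intervalIntegral.integral_nonneg (by norm_num : (1/2:ℝ) ≤ 1)
    intro u hu
    have h0 : (0:ℝ) ≤ u := le_trans (by norm_num) hu.1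
    have h1 : u ≤ 1 := hu.2
    have : (0:ℝ) ≤ 1 - u := by linarith
    positivity
  have hle : (∫ t in (0:ℝ)..(1/2:ℝ), (1/2 : ℝ) * (t ^ ((k:ℝ)-s-1) * (1-t)^l))
      ≤ ∫ t in (0:ℝ)..1, (1/2 : ℝ) * (t ^ ((k:ℝ)-s-1) * (1-t)^l) := by
    rw [← hadd]; linarith
  refine hle.trans ?_
  rw [intervalIntegral.integral_const_mul]
  have : ∫ t in (0:ℝ)..1, t ^ ((k:ℝ)-s-1) * (1-t)^l
      = (l.factorial : ℝ) / ∏ j ∈ range (l+1), ((k:ℝ) - s + j) := by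
    have := beta_eval ((k:ℝ) - s) (by linarith) l
    simpa using this
  rw [this]



set_option maxHeartbeats 2000000 in
lemma B_bound (s : ℝ) (hs0 : 0 < s) (hs1 : s < 1) (k l : ℕ) (hk : 2 ≤ k) (hl : 2 ≤ l) :
    (l.factorial : ℝ) / ∏ j ∈ range (l+1), ((k:ℝ) - s + j)
      ≤ 2 * ((k.factorial : ℝ) * (l.factorial : ℝ) / ((k+l).factorial : ℝ))
        * ((((k+l:ℕ)):ℝ)/(k:ℝ))^s / (k:ℝ) := by
  set K : ℝ := (k:ℝ) with hKdef
  have hK2 : (2:ℝ) ≤ K := by rw [hKdef]; exact_mod_cast hk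
  set N : ℝ := ((k+l : ℕ):ℝ) with hNdef
  have hN4 : (4:ℝ) ≤ N := by
    have h4 : (4:ℕ) ≤ k + l := by omega
    rw [hNdef]; exact_mod_cast h4
  set x : ℝ := ((k-2).factorial : ℝ) with hxdef
  set y : ℝ := ((k+l-1).factorial : ℝ) with hydef
  have hxpos : 0 < x := by positivity
  have hypos : 0 < y := by positivity
  have hlf : (0:ℝ) < (l.factorial : ℝ) := by positivity
  set Q1 : ℝ := ∏ j ∈ range (l+1), ((K-1) + j) with hQ1def
  set Q2 : ℝ := ∏ j ∈ range (l+1), (K + j) with hQ2def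
  set P : ℝ := ∏ j ∈ range (l+1), (K - s + j) with hPdef
  -- ℕ facts
  have nfk : k.factorial = k * ((k-1) * (k-2).factorial) := by
    have e1 : k = (k-1) + 1 := by omega
    have e2 : k - 1 = (k-2) + 1 := by omega
    calc k.factorial = ((k-1)+1).factorial := by rw [← e1]
      _ = ((k-1)+1) * (k-1).factorial := Nat.factorial_succ _
      _ = k * (((k-2)+1).factorial) := by rw [← e1, ← e2]
      _ = k * (((k-2)+1) * (k-2).factorial) := by rw [Nat.factorial_succ]
      _ = k * ((k-1) * (k-2).factorial) := by rw [← e2]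
  have nfn : (k+l).factorial = (k+l) * (k+l-1).factorial := by
    have e1 : k+l = (k+l-1)+1 := by omega
    calc (k+l).factorial = ((k+l-1)+1).factorial := by rw [← e1]
      _ = ((k+l-1)+1) * (k+l-1).factorial := Nat.factorial_succ _
      _ = (k+l) * (k+l-1).factorial := by rw [← e1]
  have nf1 : (k-1).factorial = (k-1) * (k-2).factorial := by
    have e2 : k - 1 = (k-2) + 1 := by omega
    rw [e2, Nat.factorial_succ]
  -- cast identities
  have cast1 : x * Q1 = y := by
    have h := prod_fact (k-2) l
    have e1 : ∀ j, k-2+1+j = (k-1)+j := fun j => by omega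
    simp only [e1] at h
    have e2 : k-2+l+1 = k+l-1 := by omega
    rw [e2] at h
    have hc := congrArg (fun m : ℕ => (m:ℝ)) h
    simp only [Nat.cast_mul, Nat.cast_prod, Nat.cast_add,
      Nat.cast_sub (show 1 ≤ k by omega), Nat.cast_one] at hc
    rw [hxdef, hQ1def, hydef]
    convert hc using 2
  have cast2 : ((K-1) * x) * Q2 = N * y := by
    have h := prod_fact (k-1) l
    have e1 : ∀ j, k-1+1+j = k+j := fun j => by omega
    simp only [e1] at h
    have e2 : k-1+l+1 = k+l := by omega
    rw [e2, nf1, nfn] at h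
    have hc := congrArg (fun m : ℕ => (m:ℝ)) h
    simp only [Nat.cast_mul, Nat.cast_prod, Nat.cast_add,
      Nat.cast_sub (show 1 ≤ k by omega), Nat.cast_one] at hc
    rw [hydef, hQ2def, hNdef, hxdef]
    push_cast
    push_cast at hc
    linarith [hc]
  have castk : (k.factorial : ℝ) = K * ((K-1) * x) := by
    have hc := congrArg (fun m : ℕ => (m:ℝ)) nfk
    simp only [Nat.cast_mul, Nat.cast_sub (show 1 ≤ k by omega), Nat.cast_one] at hc
    rw [hxdef, hKdef]
    exact_mod_cast hc
  have castn : ((k+l).factorial : ℝ) = N * y := by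
    have hc := congrArg (fun m : ℕ => (m:ℝ)) nfn
    push_cast at hc
    rw [hydef, hNdef]
    push_cast
    linarith [hc]
  have hK1pos : (0:ℝ) < K - 1 := by linarith
  have hNpos : (0:ℝ) < N := by linarith
  have hKpos : (0:ℝ) < K := by linarith
  have hQ1pos : 0 < Q1 := by
    have : Q1 = y / x := by rw [eq_div_iff hxpos.ne']; linarith [cast1]
    rw [this]; positivity
  have hQ2pos : 0 < Q2 := by
    have : Q2 = N * y / ((K-1)*x) := by rw [eq_div_iff (by positivity : ((K-1)*x) ≠ 0)]; linarith [cast2]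
    rw [this]; positivity
  -- AM-GM step
  have step1 : Q1^s * Q2^(1-s) ≤ P := by
    rw [hQ1def, hQ2def, hPdef,
      ← Real.finset_prod_rpow _ _ (fun j _ => by positivity) s,
      ← Real.finset_prod_rpow _ _ (fun j _ => by positivity) (1-s),
      ← Finset.prod_mul_distrib]
    apply Finset.prod_le_prod
    · intro j _; positivity
    · intro j _
      have := Real.geom_mean_le_arith_mean2_weighted hs0.le (by linarith : (0:ℝ) ≤ 1 - s)
        (by positivity : (0:ℝ) ≤ (K-1) + (j:ℝ)) (by positivity : (0:ℝ) ≤ K + (j:ℝ)) (by ring)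
      calc ((K-1) + (j:ℝ))^s * (K + (j:ℝ))^(1-s) ≤ s * ((K-1)+(j:ℝ)) + (1-s) * (K+(j:ℝ)) := this
        _ = K - s + (j:ℝ) := by ring
  have hPpos : 0 < P := lt_of_lt_of_le (by positivity) step1
  -- combine Q2 = Q1 * (N/(K-1))
  have hQ2eq : Q2 = Q1 * (N/(K-1)) := by
    have h1 : Q1 = y / x := by rw [eq_div_iff hxpos.ne']; linarith [cast1]
    have h2 : Q2 = N * y / ((K-1)*x) := by
      rw [eq_div_iff (by positivity : ((K-1)*x) ≠ 0)]; linarith [cast2]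
    rw [h1, h2]; field_simp
  have hE : Q1^s * Q2^(1-s) = Q1 * (N/(K-1))^(1-s) := by
    rw [hQ2eq, Real.mul_rpow hQ1pos.le (by positivity), ← mul_assoc,
      ← Real.rpow_add hQ1pos]
    norm_num
  -- key scalar inequality
  have key : K^s ≤ 2 * (K-1)^s := by
    have h1 : K ≤ 2*(K-1) := by linarith
    have h2 : K^s ≤ (2*(K-1))^s := Real.rpow_le_rpow hKpos.le h1 hs0.le
    have h3 : (2*(K-1))^s = 2^s * (K-1)^s := Real.mul_rpow (by norm_num) hK1pos.le
    have h4 : (2:ℝ)^s ≤ 2 := by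
      calc (2:ℝ)^s ≤ (2:ℝ)^(1:ℝ) := Real.rpow_le_rpow_of_exponent_le (by norm_num) hs1.le
        _ = 2 := Real.rpow_one 2
    calc K^s ≤ (2*(K-1))^s := h2
      _ = 2^s * (K-1)^s := h3
      _ ≤ 2 * (K-1)^s := mul_le_mul_of_nonneg_right h4 (Real.rpow_nonneg hK1pos.le s)
  -- final chain
  calc (l.factorial : ℝ) / P ≤ (l.factorial : ℝ) / (Q1^s * Q2^(1-s)) := by
        apply div_le_div_of_nonneg_left hlf.le (by positivity) step1
    _ ≤ 2 * ((k.factorial : ℝ) * (l.factorial : ℝ) / ((k+l).factorial : ℝ)) * (N/K)^s / K := by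
        rw [hE, castk, castn]
        have h1 : Q1 = y / x := by rw [eq_div_iff hxpos.ne']; linarith [cast1]
        rw [h1]
        have hu : (N/(K-1))^((1:ℝ)-s) = N^((1:ℝ)-s)/(K-1)^((1:ℝ)-s) := Real.div_rpow hNpos.le hK1pos.le _
        have hv : (N/K)^s = N^s/K^s := Real.div_rpow hNpos.le hKpos.le _
        rw [hu, hv]
        have eN : N^s * N^((1:ℝ)-s) = N := by
          rw [← Real.rpow_add hNpos]; norm_num
        have eK1 : (K-1)^s * (K-1)^((1:ℝ)-s) = K-1 := by
          rw [← Real.rpow_add hK1pos]; norm_num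
        have hNs : 0 < N^s := Real.rpow_pos_of_pos hNpos s
        have hN1s : 0 < N^((1:ℝ)-s) := Real.rpow_pos_of_pos hNpos (1-s)
        have hKs : 0 < K^s := Real.rpow_pos_of_pos hKpos s
        have hK1s : 0 < (K-1)^s := Real.rpow_pos_of_pos hK1pos s
        have hK11s : 0 < (K-1)^((1:ℝ)-s) := Real.rpow_pos_of_pos hK1pos (1-s)
        have key2 : (K-1)^((1:ℝ)-s) * K^s ≤ 2*(K-1) := by
          calc (K-1)^((1:ℝ)-s) * K^s ≤ (K-1)^((1:ℝ)-s) * (2*(K-1)^s) :=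
                mul_le_mul_of_nonneg_left key hK11s.le
            _ = 2*((K-1)^s * (K-1)^((1:ℝ)-s)) := by ring
            _ = 2*(K-1) := by rw [eK1]
        set F : ℝ := (l.factorial : ℝ) with hFdef
        set U : ℝ := (K-1)^((1:ℝ)-s) with hUdef
        set V : ℝ := N^((1:ℝ)-s) with hVdef
        set W : ℝ := N^s with hWdef
        set Z : ℝ := K^s with hZdef
        have LHSeq : F / (y/x * (V/U)) = F * x * U / (y * V) := by
          field_simp
        have RHSeq : 2 * (K*((K-1)*x) * F / (N*y)) * (W/Z) / K = 2*(K-1)*x*F*W / (Z * N * y) := by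
          field_simp
        rw [LHSeq, RHSeq, div_le_div_iff₀ (by positivity) (by positivity)]
        calc F*x*U*(Z*N*y) = (U*Z) * (F*x*N*y) := by ring
          _ ≤ (2*(K-1)) * (F*x*N*y) := mul_le_mul_of_nonneg_right key2 (by positivity)
          _ = 2*(K-1)*x*F*W*(y*V) := by
              linear_combination (-2*(K-1)*F*x*y) * eN
  

-- 4^m (m!)^2 ≤ 2 √m (2m)!
lemma central_sqrt (m : ℕ) (hm : 1 ≤ m) :
    (4:ℝ)^m * ((m.factorial : ℝ))^2 ≤ 2 * Real.sqrt m * ((2*m).factorial : ℝ) := by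
  have h := fact_ineq2 m hm
  have hc : (16:ℝ)^m * ((m.factorial:ℝ))^4 ≤ 4*(m:ℝ)*(((2*m).factorial : ℝ))^2 := by
    exact_mod_cast h
  have hL : (0:ℝ) ≤ (4:ℝ)^m * ((m.factorial : ℝ))^2 := by positivity
  have hR : (0:ℝ) ≤ 2 * Real.sqrt m * ((2*m).factorial : ℝ) := by positivity
  have hsq : ((4:ℝ)^m * ((m.factorial : ℝ))^2)^2 ≤ (2 * Real.sqrt m * ((2*m).factorial : ℝ))^2 := by
    have e : (2 * Real.sqrt m * ((2*m).factorial : ℝ))^2 = 4*(m:ℝ)*(((2*m).factorial : ℝ))^2 := by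
      have : Real.sqrt m ^ 2 = (m:ℝ) := Real.sq_sqrt (by positivity)
      nlinarith [this]
    rw [e]
    calc ((4:ℝ)^m * ((m.factorial : ℝ))^2)^2 = (16:ℝ)^m * ((m.factorial:ℝ))^4 := by
          rw [show (16:ℝ) = 4^2 by norm_num, ← pow_mul, mul_comm 2 m, pow_mul]; ring
      _ ≤ 4*(m:ℝ)*(((2*m).factorial : ℝ))^2 := hc
  calc (4:ℝ)^m * ((m.factorial : ℝ))^2
      = Real.sqrt (((4:ℝ)^m * ((m.factorial : ℝ))^2)^2) := (Real.sqrt_sq hL).symm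
    _ ≤ Real.sqrt ((2 * Real.sqrt m * ((2*m).factorial : ℝ))^2) := Real.sqrt_le_sqrt hsq
    _ = 2 * Real.sqrt m * ((2*m).factorial : ℝ) := Real.sqrt_sq hR

-- R bound for k ≤ l
lemma R_le_aux (k l : ℕ) (hk : 1 ≤ k) (hkl : k ≤ l) :
    ((2*(k+l)).factorial : ℝ) * (((k.factorial : ℝ)) * ((l.factorial : ℝ)))^2
      ≤ 2 * Real.sqrt k * (((2*k).factorial : ℝ) * ((2*l).factorial : ℝ) * ((k+l).factorial : ℝ)^2) := by
  have h1 : ((2*(k+l)).factorial : ℝ) * ((l.factorial : ℝ))^2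
      ≤ 4^k * (((2*l).factorial : ℝ) * ((k+l).factorial : ℝ)^2) := by
    exact_mod_cast fact_ineq1 l k
  have h2 := central_sqrt k hk
  calc ((2*(k+l)).factorial : ℝ) * (((k.factorial : ℝ)) * ((l.factorial : ℝ)))^2
      = (((2*(k+l)).factorial : ℝ) * ((l.factorial : ℝ))^2) * ((k.factorial : ℝ))^2 := by ring
    _ ≤ (4^k * (((2*l).factorial : ℝ) * ((k+l).factorial : ℝ)^2)) * ((k.factorial : ℝ))^2 := by
        apply mul_le_mul_of_nonneg_right h1 (by positivity)
    _ = (4^k * ((k.factorial : ℝ))^2) * (((2*l).factorial : ℝ) * ((k+l).factorial : ℝ)^2) := by ring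
    _ ≤ (2 * Real.sqrt k * ((2*k).factorial : ℝ)) * (((2*l).factorial : ℝ) * ((k+l).factorial : ℝ)^2) := by
        apply mul_le_mul_of_nonneg_right h2 (by positivity)
    _ = 2 * Real.sqrt k * (((2*k).factorial : ℝ) * ((2*l).factorial : ℝ) * ((k+l).factorial : ℝ)^2) := by
        ring

set_option maxHeartbeats 1000000 in
lemma Q_bound (k l : ℕ) (hk : 2 ≤ k) (hl : 2 ≤ l) :
    ((2*k+2*l+1).factorial : ℝ) * (((k.factorial : ℝ)) * ((l.factorial : ℝ)))^2
      ≤ 3 * Real.sqrt (((k+l:ℕ):ℝ) / ((k:ℝ)*(l:ℝ)))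
        * (((2*k+1).factorial : ℝ) * ((2*l+1).factorial : ℝ) * ((k+l).factorial : ℝ)^2) := by
  set K : ℝ := (k:ℝ) with hKdef
  set L : ℝ := (l:ℝ) with hLdef
  set N : ℝ := ((k+l:ℕ):ℝ) with hNdef
  have hK2 : (2:ℝ) ≤ K := by rw [hKdef]; exact_mod_cast hk
  have hL2 : (2:ℝ) ≤ L := by rw [hLdef]; exact_mod_cast hl
  have hNKL : N = K + L := by rw [hNdef, hKdef, hLdef]; push_cast; ring
  have hKpos : (0:ℝ) < K := by linarith
  have hLpos : (0:ℝ) < L := by linarith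
  have hNpos : (0:ℝ) < N := by rw [hNKL]; linarith
  -- min(k,l) ≤ 2 K L / N
  have hmin : Real.sqrt (min K L) ≤ Real.sqrt 2 * Real.sqrt (K*L/N) := by
    rw [← Real.sqrt_mul (by norm_num) (K*L/N)]
    apply Real.sqrt_le_sqrt
    rcases le_total K L with h | h
    · rw [min_eq_left h]
      have h2 : K * N ≤ 2*(K*L) := by rw [hNKL]; nlinarith
      calc K = K*N/N := by field_simp
        _ ≤ 2*(K*L)/N := by gcongr
        _ = 2*(K*L/N) := by ring
    · rw [min_eq_right h]
      have h2 : L * N ≤ 2*(K*L) := by rw [hNKL]; nlinarith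
      calc L = L*N/N := by field_simp
        _ ≤ 2*(K*L)/N := by gcongr
        _ = 2*(K*L/N) := by ring
  -- R bound with min
  have hR : ((2*(k+l)).factorial : ℝ) * (((k.factorial : ℝ)) * ((l.factorial : ℝ)))^2
      ≤ 2 * Real.sqrt (min K L) * (((2*k).factorial : ℝ) * ((2*l).factorial : ℝ) * ((k+l).factorial : ℝ)^2) := by
    rcases le_total k l with h | h
    · have := R_le_aux k l (by omega) h
      rw [min_eq_left (by rw [hKdef, hLdef]; exact_mod_cast h)]
      exact this
    · have := R_le_aux l k (by omega) h
      rw [min_eq_right (by rw [hKdef, hLdef]; exact_mod_cast h)]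
      calc ((2*(k+l)).factorial : ℝ) * (((k.factorial : ℝ)) * ((l.factorial : ℝ)))^2
          = ((2*(l+k)).factorial : ℝ) * (((l.factorial : ℝ)) * ((k.factorial : ℝ)))^2 := by
            rw [Nat.add_comm k l]; ring
        _ ≤ 2 * Real.sqrt l * (((2*l).factorial : ℝ) * ((2*k).factorial : ℝ) * ((l+k).factorial : ℝ)^2) := this
        _ = 2 * Real.sqrt l * (((2*k).factorial : ℝ) * ((2*l).factorial : ℝ) * ((k+l).factorial : ℝ)^2) := by
            rw [Nat.add_comm l k]; ring
  -- expand (2k+2l+1)!, (2k+1)!, (2l+1)!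
  have e1 : ((2*k+2*l+1).factorial : ℝ) = (2*(K+L)+1) * ((2*(k+l)).factorial : ℝ) := by
    rw [show 2*k+2*l+1 = (2*(k+l))+1 by ring, Nat.factorial_succ]
    push_cast [hKdef, hLdef]
    ring
  have e2 : ((2*k+1).factorial : ℝ) = (2*K+1) * ((2*k).factorial : ℝ) := by
    rw [Nat.factorial_succ]; push_cast [hKdef]; ring
  have e3 : ((2*l+1).factorial : ℝ) = (2*L+1) * ((2*l).factorial : ℝ) := by
    rw [Nat.factorial_succ]; push_cast [hLdef]; ring
  -- scalar inequality : (2(K+L)+1) * 2√(min) ≤ 3 √(N/(KL)) (2K+1)(2L+1)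
  set a : ℝ := Real.sqrt N with hadef
  set b : ℝ := Real.sqrt (K*L) with hbdef
  have hapos : 0 < a := Real.sqrt_pos.mpr hNpos
  have hbpos : 0 < b := Real.sqrt_pos.mpr (by positivity)
  have ha2 : a^2 = N := Real.sq_sqrt hNpos.le
  have hb2 : b^2 = K*L := Real.sq_sqrt (by positivity)
  have e4 : Real.sqrt (K*L/N) = b/a := by
    rw [hadef, hbdef, Real.sqrt_div (by positivity) N]
  have e5 : Real.sqrt (N/(K*L)) = a/b := by
    rw [hadef, hbdef, Real.sqrt_div hNpos.le (K*L)]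
  have hscal : (2*(K+L)+1) * (2 * Real.sqrt (min K L))
      ≤ 3 * Real.sqrt (N / (K*L)) * ((2*K+1) * (2*L+1)) := by
    have hmin2 : 2 * Real.sqrt (min K L) ≤ 2 * (Real.sqrt 2 * Real.sqrt (K*L/N)) :=
      mul_le_mul_of_nonneg_left hmin (by norm_num)
    have h1 : (2*(K+L)+1) * (2 * Real.sqrt (min K L))
        ≤ (3*N) * (2 * (Real.sqrt 2 * Real.sqrt (K*L/N))) := by
      apply mul_le_mul (by rw [hNKL]; linarith) hmin2 (by positivity) (by positivity)
    refine h1.trans ?_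
    rw [e4, e5]
    have h6 : (3*N) * (2*(Real.sqrt 2*(b/a))) = 6*Real.sqrt 2*(a*b) := by
      rw [← ha2]; field_simp; ring
    have hs2 : Real.sqrt 2 ≤ 2 := by
      nlinarith [Real.sq_sqrt (show (0:ℝ) ≤ 2 by norm_num), Real.sqrt_nonneg 2]
    have h7 : 6*Real.sqrt 2*(a*b) ≤ 12*(a*b) := by
      nlinarith [mul_pos hapos hbpos, Real.sqrt_nonneg 2]
    have h8 : 12*(a*b) ≤ 3*(a/b)*((2*K+1)*(2*L+1)) := by
      have hKL : 4*(K*L) ≤ (2*K+1)*(2*L+1) := by nlinarith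
      have h9 : 3*(a/b)*(4*(K*L)) = 12*(a*b) := by
        rw [← hb2]; field_simp; ring
      rw [← h9]
      apply mul_le_mul_of_nonneg_left hKL (by positivity)
    linarith [h6, h7, h8]
  -- assemble
  calc ((2*k+2*l+1).factorial : ℝ) * (((k.factorial : ℝ)) * ((l.factorial : ℝ)))^2
      = (2*(K+L)+1) * (((2*(k+l)).factorial : ℝ) * (((k.factorial : ℝ)) * ((l.factorial : ℝ)))^2) := by
        rw [e1]; ring
    _ ≤ (2*(K+L)+1) * (2 * Real.sqrt (min K L) * (((2*k).factorial : ℝ) * ((2*l).factorial : ℝ) * ((k+l).factorial : ℝ)^2)) := by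
        apply mul_le_mul_of_nonneg_left hR (by positivity)
    _ = ((2*(K+L)+1) * (2 * Real.sqrt (min K L))) * (((2*k).factorial : ℝ) * ((2*l).factorial : ℝ) * ((k+l).factorial : ℝ)^2) := by
        ring
    _ ≤ (3 * Real.sqrt (N / (K*L)) * ((2*K+1) * (2*L+1))) * (((2*k).factorial : ℝ) * ((2*l).factorial : ℝ) * ((k+l).factorial : ℝ)^2) := by
        apply mul_le_mul_of_nonneg_right hscal (by positivity)
    _ = 3 * Real.sqrt (N / (K*L)) * (((2*k+1).factorial : ℝ) * ((2*l+1).factorial : ℝ) * ((k+l).factorial : ℝ)^2) := by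
        rw [e2, e3]; ring

set_option maxHeartbeats 1000000 in
lemma term_bound (s α : ℝ) (hs0 : 0 < s) (hs1 : s < 1) (hα : 0 < α) (hαs : α < 2*s)
    (k l : ℕ) (hk : 2 ≤ k) (hl : 2 ≤ l) :
    (boltzMu s k l)^2 * (l:ℝ)^((3:ℝ)/2+α-s) * (k:ℝ)^((3:ℝ)/2+α)
      ≤ 3 * (((k+l:ℕ)):ℝ)^(s+3/2+α) * (k:ℝ)^(-(1+(2*s-α))) := by
  set K : ℝ := (k:ℝ) with hKdef
  set L : ℝ := (l:ℝ) with hLdef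
  set N : ℝ := ((k+l:ℕ):ℝ) with hNdef
  have hK2 : (2:ℝ) ≤ K := by rw [hKdef]; exact_mod_cast hk
  have hL2 : (2:ℝ) ≤ L := by rw [hLdef]; exact_mod_cast hl
  have hNKL : N = K + L := by rw [hNdef, hKdef, hLdef]; push_cast; ring
  have hKpos : (0:ℝ) < K := by linarith
  have hLpos : (0:ℝ) < L := by linarith
  have hNpos : (0:ℝ) < N := by rw [hNKL]; linarith
  have hLN : L ≤ N := by rw [hNKL]; linarith
  -- notation
  set D : ℝ := ((2*k+2*l+1).factorial : ℝ) / (((2*k+1).factorial : ℝ) * ((2*l+1).factorial : ℝ)) with hDdef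
  set I : ℝ := ∫ θ in (0:ℝ)..(π/4), Real.sin θ ^ (2*(k:ℝ) - 1 - 2*s) * Real.cos θ ^ (2*l+1) with hIdef
  have hmu : boltzMu s k l = Real.sqrt D * I := rfl
  have hDnn : 0 ≤ D := by positivity
  have hmusq : (boltzMu s k l)^2 = D * I^2 := by
    rw [hmu, mul_pow, Real.sq_sqrt hDnn]
  -- I bounds
  have hI0 : 0 ≤ I := by
    rw [hIdef]
    apply intervalIntegral.integral_nonneg (by positivity)
    intro u hu
    have h1 : 0 ≤ Real.sin u := Real.sin_nonneg_of_nonneg_of_le_pi hu.1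
      (by
        have := Real.pi_pos
        have h2 := hu.2
        nlinarith)
    have h2 : 0 ≤ Real.cos u := by
      apply Real.cos_nonneg_of_mem_Icc
      constructor
      · have := Real.pi_pos; linarith [hu.1]
      · have := Real.pi_pos; nlinarith [hu.2]
    positivity
  set Bv : ℝ := (l.factorial : ℝ) / ∏ j ∈ range (l+1), ((k:ℝ) - s + j) with hBdef
  have hBnn : 0 ≤ Bv := by
    rw [hBdef]
    apply div_nonneg (by positivity)
    apply Finset.prod_nonneg
    intro j _
    have hj : (0:ℝ) ≤ (j:ℝ) := by positivity
    linarith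
  have hIB : I ≤ (1/2) * Bv := int_le s hs0 hs1 k l hk
  set F : ℝ := (k.factorial : ℝ) * (l.factorial : ℝ) / ((k+l).factorial : ℝ) with hFdef
  have hFpos : 0 < F := by rw [hFdef]; positivity
  have hBb : Bv ≤ 2 * F * (N/K)^s / K := B_bound s hs0 hs1 k l hk hl
  have hIsq : I^2 ≤ (F * (N/K)^s / K)^2 := by
    have h1 : I ≤ F * (N/K)^s / K := by
      refine hIB.trans ?_
      have := mul_le_mul_of_nonneg_left hBb (by norm_num : (0:ℝ) ≤ 1/2)
      calc (1/2) * Bv ≤ (1/2) * (2 * F * (N/K)^s / K) := this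
        _ = F * (N/K)^s / K := by ring
    exact pow_le_pow_left₀ hI0 h1 2
  -- combine with Q_bound
  have hQ : D * F^2 ≤ 3 * Real.sqrt (N / (K*L)) := by
    rw [hDdef, hFdef, div_pow, div_mul_div_comm]
    rw [div_le_iff₀ (by positivity)]
    calc ((2*k+2*l+1).factorial : ℝ) * ((k.factorial:ℝ) * (l.factorial:ℝ))^2
        ≤ 3 * Real.sqrt (N / (K*L))
          * (((2*k+1).factorial : ℝ) * ((2*l+1).factorial : ℝ) * ((k+l).factorial : ℝ)^2) := Q_bound k l hk hl
      _ = 3 * Real.sqrt (N / (K*L)) * (((2*k+1).factorial:ℝ) * ((2*l+1).factorial:ℝ) * (((k+l).factorial:ℝ))^2) := by ring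
  have hmusq2 : (boltzMu s k l)^2 ≤ 3 * Real.sqrt (N / (K*L)) * ((N/K)^s)^2 / K^2 := by
    rw [hmusq]
    calc D * I^2 ≤ D * (F * (N/K)^s / K)^2 := mul_le_mul_of_nonneg_left hIsq hDnn
      _ = (D * F^2) * ((N/K)^s)^2 / K^2 := by ring
      _ ≤ (3 * Real.sqrt (N / (K*L))) * ((N/K)^s)^2 / K^2 := by
          gcongr
      _ = 3 * Real.sqrt (N / (K*L)) * ((N/K)^s)^2 / K^2 := by ring
  -- now rpow algebra
  have eKinv : (K^2)⁻¹ = K^(-(2:ℝ)) := by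
    rw [← Real.rpow_natCast K 2, ← Real.rpow_neg hKpos.le]
    norm_num
  have e1 : Real.sqrt (N/(K*L)) = N^((1:ℝ)/2) * (K^(-((1:ℝ)/2)) * L^(-((1:ℝ)/2))) := by
    rw [Real.sqrt_eq_rpow, Real.div_rpow hNpos.le (by positivity),
      Real.mul_rpow hKpos.le hLpos.le, Real.rpow_neg hKpos.le, Real.rpow_neg hLpos.le]
    field_simp
  have e2 : ((N/K)^s)^2 = N^(2*s) * K^(-(2*s)) := by
    rw [← Real.rpow_natCast ((N/K)^s) 2, ← Real.rpow_mul (by positivity),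
      Real.div_rpow hNpos.le hKpos.le, Real.rpow_neg hKpos.le,
      show s*(2:ℕ) = 2*s by push_cast; ring]
    rw [div_eq_mul_inv]
  have eK : K^(-((1:ℝ)/2)) * K^(-(2*s)) * K^(-(2:ℝ)) * K^((3:ℝ)/2+α) = K^(-(1+(2*s-α))) := by
    rw [← Real.rpow_add hKpos, ← Real.rpow_add hKpos, ← Real.rpow_add hKpos]
    congr 1; ring
  have eL : L^(-((1:ℝ)/2)) * L^((3:ℝ)/2+α-s) = L^(1+α-s) := by
    rw [← Real.rpow_add hLpos]; congr 1; ring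
  have eN2 : N^((1:ℝ)/2) * N^(2*s) = N^((1:ℝ)/2+2*s) := (Real.rpow_add hNpos _ _).symm
  have hLle : L^(1+α-s) ≤ N^(1+α-s) := Real.rpow_le_rpow hLpos.le hLN (by linarith)
  have eN3 : N^((1:ℝ)/2+2*s) * N^(1+α-s) = N^(s+3/2+α) := by
    rw [← Real.rpow_add hNpos]; congr 1; ring
  have hwL : (0:ℝ) ≤ L^((3:ℝ)/2+α-s) := (Real.rpow_pos_of_pos hLpos _).le
  have hwK : (0:ℝ) ≤ K^((3:ℝ)/2+α) := (Real.rpow_pos_of_pos hKpos _).le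
  calc (boltzMu s k l)^2 * L^((3:ℝ)/2+α-s) * K^((3:ℝ)/2+α)
      ≤ (3 * Real.sqrt (N / (K*L)) * ((N/K)^s)^2 / K^2) * L^((3:ℝ)/2+α-s) * K^((3:ℝ)/2+α) := by
        apply mul_le_mul_of_nonneg_right (mul_le_mul_of_nonneg_right hmusq2 hwL) hwK
    _ = (N^((1:ℝ)/2) * N^(2*s)) * (K^(-((1:ℝ)/2)) * K^(-(2*s)) * K^(-(2:ℝ)) * K^((3:ℝ)/2+α))
          * (L^(-((1:ℝ)/2)) * L^((3:ℝ)/2+α-s)) * 3 := by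
        rw [div_eq_mul_inv, eKinv, e1, e2]; ring
    _ = N^((1:ℝ)/2+2*s) * K^(-(1+(2*s-α))) * L^(1+α-s) * 3 := by rw [eK, eL, eN2]
    _ ≤ N^((1:ℝ)/2+2*s) * K^(-(1+(2*s-α))) * N^(1+α-s) * 3 := by
        apply mul_le_mul_of_nonneg_right _ (by norm_num)
        apply mul_le_mul_of_nonneg_left hLle
        positivity
    _ = 3 * N^(s+3/2+α) * K^(-(1+(2*s-α))) := by
        rw [show N^((1:ℝ)/2+2*s) * K^(-(1+(2*s-α))) * N^(1+α-s) * 3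
            = (N^((1:ℝ)/2+2*s) * N^(1+α-s)) * K^(-(1+(2*s-α))) * 3 from by ring, eN3]
        ring

lemma step_ineq (ε : ℝ) (hε0 : 0 < ε) (hε1 : ε ≤ 1) (M : ℕ) (hM : 1 ≤ M) :
    ε * ((M:ℝ)+1)^(-(1+ε)) ≤ (M:ℝ)^(-ε) - ((M:ℝ)+1)^(-ε) := by
  set b : ℝ := (M:ℝ) + 1 with hbdef
  have hM1 : (1:ℝ) ≤ (M:ℝ) := by exact_mod_cast hM
  have hb2 : (2:ℝ) ≤ b := by rw [hbdef]; linarith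
  have hbpos : (0:ℝ) < b := by linarith
  have hMpos : (0:ℝ) < (M:ℝ) := by linarith
  set c : ℝ := ((M:ℝ)/b)^ε with hcdef
  have hcpos : 0 < c := Real.rpow_pos_of_pos (by positivity) ε
  have hcle1 : c ≤ 1 := Real.rpow_le_one (by positivity) (by rw [div_le_one hbpos]; linarith) hε0.le
  have hc1 : c ≤ 1 - ε/b := by
    have h := Real.geom_mean_le_arith_mean2_weighted hε0.le (by linarith : (0:ℝ) ≤ 1-ε)
      (by positivity : (0:ℝ) ≤ (M:ℝ)/b) (by norm_num : (0:ℝ) ≤ (1:ℝ)) (by ring)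
    rw [Real.one_rpow, mul_one] at h
    calc c ≤ ε * ((M:ℝ)/b) + (1-ε)*1 := h
      _ = 1 - ε/b := by field_simp; ring
  have hc1' : b * c ≤ b - ε := by
    have h := mul_le_mul_of_nonneg_left hc1 (by positivity : (0:ℝ) ≤ b)
    calc b*c ≤ b*(1-ε/b) := h
      _ = b - ε := by field_simp
  have key : ε * c ≤ b*(1-c) := by nlinarith
  set B1 : ℝ := b^(-ε) with hB1def
  have hB1 : 0 < B1 := Real.rpow_pos_of_pos hbpos _
  have hMc : (M:ℝ)^(-ε) = B1/c := by
    have h1 : c * b^ε = (M:ℝ)^ε := by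
      rw [hcdef, Real.div_rpow hMpos.le hbpos.le]
      field_simp
    rw [Real.rpow_neg hMpos.le, ← h1, hB1def, Real.rpow_neg hbpos.le]
    rw [mul_inv]
    field_simp [mul_comm]
  have e0 : b^(-(1+ε)) = B1/b := by
    rw [hB1def, show -(1+ε) = -ε + (-1) from by ring, Real.rpow_add hbpos,
      Real.rpow_neg_one, div_eq_mul_inv]
  rw [hMc, e0]
  have LHS' : ε*(B1/b) = (ε*c*B1)/(b*c) := by field_simp
  have RHS' : B1/c - B1 = (b*(1-c)*B1)/(b*c) := by field_simp
  rw [LHS', RHS']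
  apply div_le_div_of_nonneg_right ?_ (by positivity)
  exact mul_le_mul_of_nonneg_right key hB1.le

lemma sum_aux (ε : ℝ) (hε0 : 0 < ε) (hε1 : ε ≤ 1) :
    ∀ M : ℕ, 1 ≤ M → ε * ∑ k ∈ Icc 2 M, (k:ℝ)^(-(1+ε)) ≤ 1 - (M:ℝ)^(-ε) := by
  intro M
  induction M with
  | zero => omega
  | succ M ih =>
    intro _
    rcases Nat.eq_or_lt_of_le (show 1 ≤ M + 1 by omega) with h | h
    · rw [← h]
      norm_num
    · have hM : 1 ≤ M := by omega
      have hs := ih hM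
      rw [Finset.sum_Icc_succ_top (by omega : 2 ≤ M + 1)]
      have hstep := step_ineq ε hε0 hε1 M hM
      push_cast
      push_cast at hs hstep
      nlinarith
  
lemma sum_le (ε : ℝ) (hε0 : 0 < ε) (hε1 : ε ≤ 1) (M : ℕ) :
    ∑ k ∈ Icc 2 M, (k:ℝ)^(-(1+ε)) ≤ 1/ε := by
  rcases Nat.lt_or_ge M 1 with h | h
  · interval_cases M
    simp
    positivity
  · have := sum_aux ε hε0 hε1 M h
    have hM : (0:ℝ) < (M:ℝ)^(-ε) := Real.rpow_pos_of_pos (by exact_mod_cast h) _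
    rw [le_div_iff₀ hε0, mul_comm]
    linarith

theorem sum_mu_sq_weighted_le (s α : ℝ) (hs : 0 < s) (hs1 : s < 1)
    (hα : 0 < α) (hαs : α < 2 * s) :
    ∃ C > 0, ∀ n : ℕ, 4 ≤ n →
      ∑ k ∈ Finset.Icc 2 (n - 2),
          (boltzMu s k (n - k)) ^ 2 * ((n - k : ℕ) : ℝ) ^ ((3:ℝ)/2 + α - s) *
            (k : ℝ) ^ ((3:ℝ)/2 + α)
        ≤ C * (n : ℝ) ^ (s + 3/2 + α) := by
  set ε : ℝ := min (2*s - α) 1 with hεdef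
  have hε0 : 0 < ε := lt_min (by linarith) one_pos
  have hε1 : ε ≤ 1 := min_le_right _ _
  refine ⟨3 * (1/ε), by positivity, ?_⟩
  intro n hn
  have hsum : ∀ k ∈ Finset.Icc 2 (n-2),
      (boltzMu s k (n-k))^2 * ((n-k : ℕ):ℝ)^((3:ℝ)/2+α-s) * (k:ℝ)^((3:ℝ)/2+α)
        ≤ 3 * (n:ℝ)^(s+3/2+α) * (k:ℝ)^(-(1+ε)) := by
    intro k hk
    rw [Finset.mem_Icc] at hk
    have hk2 : 2 ≤ k := hk.1
    have hl2 : 2 ≤ n - k := by omega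
    have htb := term_bound s α hs hs1 hα hαs k (n-k) hk2 hl2
    have hkl : k + (n-k) = n := by omega
    rw [hkl] at htb
    refine htb.trans ?_
    have hK1 : (1:ℝ) ≤ (k:ℝ) := by exact_mod_cast (show 1 ≤ k by omega)
    have h2 : (k:ℝ)^(-(1+(2*s-α))) ≤ (k:ℝ)^(-(1+ε)) :=
      Real.rpow_le_rpow_of_exponent_le hK1 (by
        have h3 : ε ≤ 2*s-α := min_le_left _ _
        linarith)
    have hN : (0:ℝ) ≤ 3*(n:ℝ)^(s+3/2+α) := by positivity
    exact mul_le_mul_of_nonneg_left h2 hN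
  calc ∑ k ∈ Finset.Icc 2 (n - 2),
        (boltzMu s k (n - k)) ^ 2 * ((n - k : ℕ) : ℝ) ^ ((3:ℝ)/2 + α - s) *
          (k : ℝ) ^ ((3:ℝ)/2 + α)
      ≤ ∑ k ∈ Finset.Icc 2 (n-2), 3*(n:ℝ)^(s+3/2+α)*(k:ℝ)^(-(1+ε)) :=
        Finset.sum_le_sum hsum
    _ = 3*(n:ℝ)^(s+3/2+α) * ∑ k ∈ Finset.Icc 2 (n-2), (k:ℝ)^(-(1+ε)) := by
        rw [Finset.mul_sum]
    _ ≤ 3*(n:ℝ)^(s+3/2+α) * (1/ε) := by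
        apply mul_le_mul_of_nonneg_left (sum_le ε hε0 hε1 _) (by positivity)
    _ = 3*(1/ε) * (n:ℝ)^(s+3/2+α) := by ring
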